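/- (i) The assignment F_j ↦ 𝒢(j)(v_j^{−1}−v_j)^{−1}·𝒮_j, K_i'^{±1} ↦ 𝒦'_{±i}, J_i'^{±1} ↦ 𝒥'_{±i} extends to an 𝔽-algebra anti-homomorphism ρ⁻: ̂'𝔣⁻ → End_𝔽( ̂'𝔣⁺). (ii) For every y∈'𝔣⁻ and all x',x''∈'𝔣⁺, one has ρ⁻(y)(x'x'') = Σ ρ⁻(y₂)(x')·ρ⁻(y₁)(x''), where Δ₋(y)=Σ y₁⊗y₂. -/

import Mathlib

open scoped TensorProduct

noncomputable section

/-- A Cartan datum on `I`. -/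
structure CartanDatum (I : Type) where
  c : I → I → ℤ
  symm : ∀ i j, c i j = c j i
  pos : ∀ i, 0 < c i i
  even : ∀ i, Even (c i i)
  dvd : ∀ i j, i ≠ j → c i i ∣ 2 * c i j
  nonpos : ∀ i j, i ≠ j → 2 * c i j ≤ 0

namespace CartanDatum

variable {I : Type} (cd : CartanDatum I)

/-- `d i = (i·i)/2`. -/
def d (i : I) : ℤ := cd.c i i / 2

/-- `a i j = 2(i·j)/(i·i)`. -/
def a (i j : I) : ℤ := 2 * cd.c i j / cd.c i i

/-- Extension of the pairing to `ℕ[I] × ℕ[I]`. -/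
def dotN (ν μ : I →₀ ℕ) : ℤ :=
  ν.sum fun i m => μ.sum fun j n => (m : ℤ) * (n : ℤ) * cd.c i j

end CartanDatum

/-- A multiplicative bilinear form `ℕ[I] × ℕ[I] → 𝔽`. -/
structure MultForm (I 𝔽 : Type) [Field 𝔽] where
  f : (I →₀ ℕ) → (I →₀ ℕ) → 𝔽
  add_left : ∀ ν ν' μ, f (ν + ν') μ = f ν μ * f ν' μ
  add_right : ∀ μ ν ν', f μ (ν + ν') = f μ ν * f μ ν'
  ne_zero : ∀ ν μ, f ν μ ≠ 0

/-- The trivial multiplicative bilinear form, constantly `1`. -/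
def trivMF (I 𝔽 : Type) [Field 𝔽] : MultForm I 𝔽 :=
  ⟨fun _ _ => 1, fun _ _ _ => by ring, fun _ _ _ => by ring, fun _ _ => one_ne_zero⟩

variable {I : Type}

/-- The generator `i` of `ℕ[I]`. -/
def δN (i : I) : I →₀ ℕ := Finsupp.single i 1

/-- The model for the free algebra `'𝔣` on the `θ i`. -/
abbrev FA (𝔽 I : Type) [Field 𝔽] := MonoidAlgebra 𝔽 (FreeMonoid I)

/-- The generator `θ i` of `'𝔣`. -/
def θ (𝔽 : Type) [Field 𝔽] {I : Type} (i : I) : FA 𝔽 I :=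
  MonoidAlgebra.of 𝔽 (FreeMonoid I) (FreeMonoid.of i)

/-- The `ℕ[I]`-degree of a word. -/
def wt [DecidableEq I] (w : FreeMonoid I) : I →₀ ℕ :=
  Multiset.toFinsupp (↑(FreeMonoid.toList w))

/-- Homogeneity of degree `ν` in `'𝔣`. -/
def IsHomog {𝔽 : Type} [Field 𝔽] [DecidableEq I] (ν : I →₀ ℕ) (x : FA 𝔽 I) : Prop :=
  ∀ w ∈ Finsupp.support (x.coeff : FreeMonoid I →₀ 𝔽), wt w = ν

/-- The model for `'𝔣 ⊗ '𝔣` (basis: pairs of words). -/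
abbrev TA (𝔽 I : Type) [Field 𝔽] := MonoidAlgebra 𝔽 (FreeMonoid I × FreeMonoid I)

/-- The tensor `x ⊗ y` in the model of `'𝔣 ⊗ '𝔣`. -/
def tmul {𝔽 : Type} [Field 𝔽] (x y : FA 𝔽 I) : TA 𝔽 I :=
  Finsupp.sum (x.coeff : FreeMonoid I →₀ 𝔽) fun w a =>
    Finsupp.sum (y.coeff : FreeMonoid I →₀ 𝔽) fun u b =>
      MonoidAlgebra.ofCoeff (Finsupp.single (w, u) (a * b) : (FreeMonoid I × FreeMonoid I) →₀ 𝔽)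

/-- The twisted multiplication on `'𝔣 ⊗ '𝔣`:
`(x₁⊗x₂)(y₁⊗y₂) = v^{-|y₁|·|x₂|} β(|x₂|,|y₁|) x₁y₁ ⊗ x₂y₂`. -/
def tMul [DecidableEq I] {𝔽 : Type} [Field 𝔽] (cd : CartanDatum I) (v : 𝔽)
    (β : MultForm I 𝔽) (z z' : TA 𝔽 I) : TA 𝔽 I :=
  Finsupp.sum (z.coeff : (FreeMonoid I × FreeMonoid I) →₀ 𝔽) fun p a =>
    Finsupp.sum (z'.coeff : (FreeMonoid I × FreeMonoid I) →₀ 𝔽) fun q b =>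
      MonoidAlgebra.ofCoeff (Finsupp.single (p.1 * q.1, p.2 * q.2)
        (a * b * v ^ (-(cd.dotN (wt q.1) (wt p.2))) * β.f (wt p.2) (wt q.1))
        : (FreeMonoid I × FreeMonoid I) →₀ 𝔽)

/-- The bilinear form on `'𝔣 ⊗ '𝔣` induced by a form `B` on `'𝔣`:
`(x₁⊗x₂, y₁⊗y₂) = α(|x₁|,|x₂|) (x₁,y₁) (x₂,y₂)` for homogeneous `x₁, x₂`. -/
def pairT [DecidableEq I] {𝔽 : Type} [Field 𝔽] (α : MultForm I 𝔽)
    (B : FA 𝔽 I →ₗ[𝔽] FA 𝔽 I →ₗ[𝔽] 𝔽) (z z' : TA 𝔽 I) : 𝔽 :=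
  Finsupp.sum (z.coeff : (FreeMonoid I × FreeMonoid I) →₀ 𝔽) fun p a =>
    Finsupp.sum (z'.coeff : (FreeMonoid I × FreeMonoid I) →₀ 𝔽) fun q b =>
      a * b * α.f (wt p.1) (wt p.2)
        * B (MonoidAlgebra.single p.1 1) (MonoidAlgebra.single q.1 1)
        * B (MonoidAlgebra.single p.2 1) (MonoidAlgebra.single q.2 1)

/-- The quantum integer `[n]_c`. -/
def qnum {𝔽 : Type} [Field 𝔽] (c : 𝔽) (n : ℕ) : 𝔽 :=
  (c ^ (n : ℤ) - c ^ (-(n : ℤ))) / (c - c⁻¹)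

/-- The quantum factorial `[n]_c!`. -/
def qfact {𝔽 : Type} [Field 𝔽] (c : 𝔽) (n : ℕ) : 𝔽 :=
  ∏ k ∈ Finset.range n, qnum c (k + 1)

/-- The divided power `θ_i^{(n)} = θ_i^n / [n]_{v_i}!`. -/
def θdiv [DecidableEq I] {𝔽 : Type} [Field 𝔽] (cd : CartanDatum I) (v : 𝔽)
    (i : I) (n : ℕ) : FA 𝔽 I :=
  (qfact (v ^ cd.d i) n)⁻¹ • (θ 𝔽 i) ^ n

/-- The twisted quantum Serre element
`D_{ij} = Σ_{k+k'=1-a_{ij}} (-1)^k β(i,j)^{-k} θ_i^{(k)} θ_j θ_i^{(k')}`. -/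
def Dij [DecidableEq I] {𝔽 : Type} [Field 𝔽] (cd : CartanDatum I) (v : 𝔽)
    (g : I → I → 𝔽) (i j : I) : FA 𝔽 I :=
  ∑ k ∈ Finset.range ((1 - cd.a i j).toNat + 1),
    ((-1 : 𝔽) ^ k * ((g i j)⁻¹) ^ k) •
      (θdiv cd v i k * θ 𝔽 j * θdiv cd v i ((1 - cd.a i j).toNat - k))

end
noncomputable section

variable {I : Type}

/-- The generator `i` of `ℤ[I]`. -/
def δZ (i : I) : I →₀ ℤ := Finsupp.single i 1

/-- The inclusion `ℕ[I] → ℤ[I]`. -/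
def nz (ν : I →₀ ℕ) : I →₀ ℤ := Finsupp.mapRange (fun n : ℕ => (n : ℤ)) rfl ν

/-- The multiplicative extension to `ℤ[I] × ℤ[I]` of generator values `g : I → I → 𝔽`. -/
def extZ {𝔽 : Type} [Field 𝔽] (g : I → I → 𝔽) (ν μ : I →₀ ℤ) : 𝔽 :=
  ν.prod fun i m => μ.prod fun j n => g i j ^ (m * n)

/-- The form `⟨i,j⟩ = v^{-i·j} β(i,j) ξ(j,i)`, extended multiplicatively to `ℤ[I]`. -/
def ang {𝔽 : Type} [Field 𝔽] (cd : CartanDatum I) (v : 𝔽) (βg ξg : I → I → 𝔽) :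
    (I →₀ ℤ) → (I →₀ ℤ) → 𝔽 :=
  extZ fun i j => v ^ (-(cd.c i j)) * βg i j * ξg j i

/-- The monomial in `F : I → A` associated with a word `w`. -/
def wordProd {A : Type} [Monoid A] (F : I → A) (w : FreeMonoid I) : A :=
  ((FreeMonoid.toList w).map F).prod

/-- `x` is homogeneous of degree `μ` in the subalgebra generated by the image of `F`. -/
def HomogIn (𝔽 : Type) [Field 𝔽] [DecidableEq I] {A : Type} [Ring A] [Algebra 𝔽 A]
    (F : I → A) (μ : I →₀ ℕ) (x : A) : Prop :=
  x ∈ Submodule.span 𝔽 {z | ∃ w, wt w = μ ∧ z = wordProd F w}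

end
noncomputable section AuxScalars
variable {I : Type}

section extZ
variable {𝔽 : Type} [Field 𝔽] {g : I → I → 𝔽} (hg : ∀ i j, g i j ≠ 0)

lemma extZ_zero_left (μ : I →₀ ℤ) : extZ g 0 μ = 1 := Finsupp.prod_zero_index

lemma extZ_zero_right (ν : I →₀ ℤ) : extZ g ν 0 = 1 := by
  simp [extZ, Finsupp.prod]

include hg

lemma extZ_add_right (ν μ μ' : I →₀ ℤ) :
    extZ g ν (μ + μ') = extZ g ν μ * extZ g ν μ' := by
  unfold extZ
  rw [← Finsupp.prod_mul]
  refine Finsupp.prod_congr fun i _ => ?_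
  exact Finsupp.prod_add_index' (fun j => by simp) (fun j n n' => by
    rw [mul_add, zpow_add₀ (hg i j)])

lemma extZ_add_left (ν ν' μ : I →₀ ℤ) :
    extZ g (ν + ν') μ = extZ g ν μ * extZ g ν' μ := by
  unfold extZ
  refine Finsupp.prod_add_index' (fun i => ?_) (fun i m m' => ?_)
  · simp [Finsupp.prod]
  · rw [← Finsupp.prod_mul]
    refine Finsupp.prod_congr fun j _ => ?_
    rw [add_mul, zpow_add₀ (hg i j)]

lemma extZ_ne_zero (ν μ : I →₀ ℤ) : extZ g ν μ ≠ 0 := by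
  unfold extZ
  refine Finset.prod_ne_zero_iff.2 fun i _ => Finset.prod_ne_zero_iff.2 fun j _ => ?_
  exact zpow_ne_zero _ (hg i j)

lemma extZ_neg_left (ν μ : I →₀ ℤ) : extZ g (-ν) μ = (extZ g ν μ)⁻¹ := by
  refine eq_inv_of_mul_eq_one_left ?_
  rw [← extZ_add_left hg, neg_add_cancel, extZ_zero_left]

lemma extZ_neg_right (ν μ : I →₀ ℤ) : extZ g ν (-μ) = (extZ g ν μ)⁻¹ := by
  refine eq_inv_of_mul_eq_one_left ?_
  rw [← extZ_add_right hg, neg_add_cancel, extZ_zero_right]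

lemma extZ_sub_left (ν ν' μ : I →₀ ℤ) : extZ g (ν - ν') μ = extZ g ν μ * (extZ g ν' μ)⁻¹ := by
  rw [sub_eq_add_neg, extZ_add_left hg, extZ_neg_left hg]

lemma extZ_sub_right (ν μ μ' : I →₀ ℤ) : extZ g ν (μ - μ') = extZ g ν μ * (extZ g ν μ')⁻¹ := by
  rw [sub_eq_add_neg, extZ_add_right hg, extZ_neg_right hg]

omit hg in
lemma extZ_single (i j : I) : extZ g (δZ i) (δZ j) = g i j := by
  unfold extZ δZ
  rw [Finsupp.prod_single_index, Finsupp.prod_single_index]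
  · simp
  · simp
  · simp [Finsupp.prod]

end extZ

lemma finsuppZ_induction (P : (I →₀ ℤ) → Prop) (h0 : P 0)
    (hp : ∀ (i : I) ν, P ν → P (δZ i + ν)) (hn : ∀ (i : I) ν, P ν → P (-δZ i + ν)) :
    ∀ ν, P ν := by
  intro ν
  induction ν using Finsupp.induction with
  | zero => exact h0
  | single_add a b f _ _ hf =>
    have key : ∀ b : ℤ, P (Finsupp.single a b + f) := by
      intro b
      induction b using Int.induction_on with
      | zero => simpa using hf
      | succ k ih =>
        have h : δZ a + (Finsupp.single a (k : ℤ) + f) = Finsupp.single a ((k : ℤ) + 1) + f := by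
          rw [← add_assoc, δZ, ← Finsupp.single_add, add_comm (1 : ℤ)]
        rw [← h]; exact hp _ _ ih
      | pred k ih =>
        have h : -δZ a + (Finsupp.single a (-(k : ℤ)) + f)
            = Finsupp.single a (-(k : ℤ) - 1) + f := by
          rw [← add_assoc, δZ, ← Finsupp.single_neg, ← Finsupp.single_add]
          ring_nf
        rw [← h]; exact hn _ _ ih
    exact key b

section Words
variable {A : Type} [Monoid A] (F : I → A)

lemma wordProd_one : wordProd F 1 = 1 := rfl
lemma wordProd_of (i : I) : wordProd F (FreeMonoid.of i) = F i := by
  simp [wordProd, FreeMonoid.toList_of]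
lemma wordProd_mul (w u : FreeMonoid I) :
    wordProd F (w * u) = wordProd F w * wordProd F u := by
  simp [wordProd, FreeMonoid.toList_mul]

variable [DecidableEq I]

lemma wt_one : wt (1 : FreeMonoid I) = 0 := rfl
lemma wt_mul (w u : FreeMonoid I) : wt (w * u) = wt w + wt u := by
  simp [wt, FreeMonoid.toList_mul, ← Multiset.coe_add, Multiset.toFinsupp_add]
lemma wt_of (i : I) : wt (FreeMonoid.of i) = δN i := by
  simp [wt, FreeMonoid.toList_of, δN]
omit [DecidableEq I] in
lemma nz_zero : nz (0 : I →₀ ℕ) = 0 := by simp [nz]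
omit [DecidableEq I] in
lemma nz_add (a b : I →₀ ℕ) : nz (a + b) = nz a + nz b := by
  ext i; simp [nz]
omit [DecidableEq I] in
lemma nz_single (i : I) : nz (δN i) = δZ i := by
  ext j; simp [nz, δN, δZ, Finsupp.single_apply]
lemma nz_wt_one : nz (wt (1 : FreeMonoid I)) = 0 := by rw [wt_one, nz_zero]
lemma nz_wt_mul (w u : FreeMonoid I) : nz (wt (w * u)) = nz (wt w) + nz (wt u) := by
  rw [wt_mul, nz_add]
lemma nz_wt_of (i : I) : nz (wt (FreeMonoid.of i)) = δZ i := by rw [wt_of, nz_single]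

end Words

section EE
variable {𝔽 : Type} [Field 𝔽]

/-- `e_j(ν)`: commutation scalar. -/
def eeF (q ξ : I → I → 𝔽) (j : I) (ν : I →₀ ℤ) : 𝔽 :=
  extZ q (δZ j) ν * (extZ ξ ν (δZ j))⁻¹

/-- eigenvalue of `cK' ν` on weight `(τ₁, μ, τ₂)`. -/
def eigF (q ξ : I → I → 𝔽) (τ₁ μ τ₂ ν : I →₀ ℤ) : 𝔽 :=
  extZ q τ₁ ν * extZ q μ ν * (extZ ξ ν μ)⁻¹ * extZ ξ ν τ₂

/-- word-level commutation scalar. -/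
def eewF (q ξ : I → I → 𝔽) (w : FreeMonoid I) (ν : I →₀ ℤ) : 𝔽 :=
  ((FreeMonoid.toList w).map fun j => eeF q ξ j ν).prod

variable {q ξ : I → I → 𝔽} (hq : ∀ i j, q i j ≠ 0) (hξ : ∀ i j, ξ i j ≠ 0)

include hq hξ

lemma eeF_ne (j : I) (ν : I →₀ ℤ) : eeF q ξ j ν ≠ 0 :=
  mul_ne_zero (extZ_ne_zero hq _ _) (inv_ne_zero (extZ_ne_zero hξ _ _))

omit hq hξ in
lemma eeF_zero (j : I) : eeF q ξ j 0 = 1 := by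
  simp [eeF, extZ_zero_right, extZ_zero_left]

lemma eeF_add (j : I) (a b : I →₀ ℤ) : eeF q ξ j (a + b) = eeF q ξ j a * eeF q ξ j b := by
  unfold eeF
  rw [extZ_add_right hq, extZ_add_left hξ, mul_inv]
  ring

lemma eeF_neg (j : I) (a : I →₀ ℤ) : eeF q ξ j (-a) = (eeF q ξ j a)⁻¹ := by
  refine eq_inv_of_mul_eq_one_left ?_
  rw [← eeF_add hq hξ, neg_add_cancel, eeF_zero]

omit hq hξ in
lemma eeF_single (i j : I) : eeF q ξ j (δZ i) = q j i * (ξ i j)⁻¹ := by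
  rw [eeF, extZ_single, extZ_single]

lemma eigF_ratio (τ₁ μ τ₂ ν : I →₀ ℤ) (j : I) :
    eigF q ξ τ₁ (μ - δZ j) τ₂ ν = (eeF q ξ j ν)⁻¹ * eigF q ξ τ₁ μ τ₂ ν := by
  unfold eigF eeF
  rw [extZ_sub_left hq, extZ_sub_right hξ, mul_inv, inv_inv, mul_inv, inv_inv]
  ring

omit hq hξ in
lemma eigF_zeroν (τ₁ μ τ₂ : I →₀ ℤ) : eigF q ξ τ₁ μ τ₂ 0 = 1 := by
  simp [eigF, extZ_zero_right, extZ_zero_left]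

lemma eigF_addν (τ₁ μ τ₂ a b : I →₀ ℤ) :
    eigF q ξ τ₁ μ τ₂ (a + b) = eigF q ξ τ₁ μ τ₂ a * eigF q ξ τ₁ μ τ₂ b := by
  unfold eigF
  rw [extZ_add_right hq, extZ_add_right hq, extZ_add_left hξ, extZ_add_left hξ, mul_inv]
  ring

omit hq hξ in
lemma eewF_one (ν : I →₀ ℤ) : eewF q ξ (1 : FreeMonoid I) ν = 1 := rfl

omit hq hξ in
lemma eewF_of (i : I) (ν : I →₀ ℤ) : eewF q ξ (FreeMonoid.of i) ν = eeF q ξ i ν := by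
  simp [eewF, FreeMonoid.toList_of]

omit hq hξ in
lemma eewF_mul (w u : FreeMonoid I) (ν : I →₀ ℤ) :
    eewF q ξ (w * u) ν = eewF q ξ w ν * eewF q ξ u ν := by
  simp [eewF, FreeMonoid.toList_mul]

lemma eewF_ne (w : FreeMonoid I) (ν : I →₀ ℤ) : eewF q ξ w ν ≠ 0 := by
  unfold eewF
  refine List.prod_ne_zero fun h => ?_
  obtain ⟨j, -, hj⟩ := List.mem_map.1 h
  exact eeF_ne hq hξ j ν hj

end EE
end AuxScalars
noncomputable section Main
variable {I : Type} [DecidableEq I] {𝔽 : Type} [Field 𝔽]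

/-- The base values of the form `⟨·,·⟩`. -/
def qgF (cd : CartanDatum I) (v : 𝔽) (βg ξg : I → I → 𝔽) : I → I → 𝔽 :=
  fun i j => v ^ (-(cd.c i j)) * βg i j * ξg j i

lemma ang_eq_extZ (cd : CartanDatum I) (v : 𝔽) (βg ξg : I → I → 𝔽) :
    ang cd v βg ξg = extZ (qgF cd v βg ξg) := rfl

lemma qgF_ne {cd : CartanDatum I} {v : 𝔽} {βg ξg : I → I → 𝔽} (hv : v ≠ 0)
    (hββ : ∀ i j, βg i j * βg j i = 1) (hξne : ∀ i j, ξg i j ≠ 0) (i j : I) :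
    qgF cd v βg ξg i j ≠ 0 :=
  mul_ne_zero (mul_ne_zero (zpow_ne_zero _ hv)
    (left_ne_zero_of_mul_eq_one (hββ i j))) (hξne j i)

/-- Commutation passes to inverses (monoid version). -/
lemma comm_inv {A : Type} [Monoid A] {a a' x : A}
    (h1 : a * a' = 1) (h2 : a' * a = 1) (h : a * x = x * a) : a' * x = x * a' := by
  have e1 : a' * (a * x) * a' = x * a' := by rw [← mul_assoc, h2, one_mul]
  have e2 : a' * (x * a) * a' = a' * x := by
    rw [mul_assoc, mul_assoc, h1, mul_one]
  rw [← e2, ← h, e1]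

/-- From `A * x = c • (x * A)` and invertibility, get the inverse relation. -/
lemma comm_scalar_inv {A : Type} [Ring A] [Algebra 𝔽 A] {a a' x : A} {c : 𝔽}
    (h1 : a * a' = 1) (h2 : a' * a = 1) (hc : c ≠ 0) (h : a * x = c • (x * a)) :
    a' * x = c⁻¹ • (x * a') := by
  have key : x * a' = c • (a' * x) := by
    have e1 : a' * (a * x) * a' = x * a' := by rw [← mul_assoc, h2, one_mul]
    have e2 : a' * (c • (x * a)) * a' = c • (a' * x) := by
      rw [mul_smul_comm, smul_mul_assoc]
      congr 1
      rw [mul_assoc, mul_assoc, h1, mul_one]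
    rw [← e1, h, e2]
  rw [key, smul_smul, inv_mul_cancel₀ hc, one_smul]

section Am
variable (cd : CartanDatum I) (v : 𝔽) (βg ξg : I → I → 𝔽)
variable (hv : v ≠ 0) (hββ : ∀ i j, βg i j * βg j i = 1) (hξne : ∀ i j, ξg i j ≠ 0)
variable {Am : Type} [Ring Am] [Algebra 𝔽 Am]
variable (F : I → Am) (K' J' : (I →₀ ℤ) → Am)
variable (hK'0 : K' 0 = 1) (hK'add : ∀ a b, K' (a + b) = K' a * K' b)
variable (hJ'0 : J' 0 = 1) (hJ'add : ∀ a b, J' (a + b) = J' a * J' b)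
variable (hK'J' : ∀ a b, K' a * J' b = J' b * K' a)
variable (hK'F : ∀ i j : I, K' (δZ i) * F j
      = (ang cd v βg ξg (δZ j) (δZ i) * (ξg i j)⁻¹) • (F j * K' (δZ i)))
variable (hJ'F : ∀ i j : I, J' (δZ i) * F j = F j * J' (δZ i))

include hv hββ hξne hK'0 hK'add hK'F in
lemma K'F_gen : ∀ (ν : I →₀ ℤ) (j : I),
    K' ν * F j = eeF (qgF cd v βg ξg) ξg j ν • (F j * K' ν) := by
  have hq := qgF_ne (cd := cd) hv hββ hξne
  intro ν
  induction ν using finsuppZ_induction with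
  | h0 => intro j; rw [hK'0, eeF_zero, one_smul, one_mul, mul_one]
  | hp i ν ih =>
    intro j
    rw [hK'add, eeF_add hq hξne, mul_assoc, ih j, mul_smul_comm, ← mul_assoc, hK'F i j,
      smul_mul_assoc, smul_smul]
    have : ang cd v βg ξg (δZ j) (δZ i) * (ξg i j)⁻¹ = eeF (qgF cd v βg ξg) ξg j (δZ i) := by
      rw [eeF_single, ang_eq_extZ, extZ_single]
    rw [this, mul_assoc, mul_smul, smul_smul, mul_comm]
  | hn i ν ih =>
    intro j
    have hbase : K' (-δZ i) * F j = eeF (qgF cd v βg ξg) ξg j (-δZ i) • (F j * K' (-δZ i)) := by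
      rw [eeF_neg hq hξne]
      refine comm_scalar_inv (a := K' (δZ i)) ?_ ?_ (eeF_ne hq hξne j (δZ i)) ?_
      · rw [← hK'add, add_neg_cancel, hK'0]
      · rw [← hK'add, neg_add_cancel, hK'0]
      · rw [hK'F i j, eeF_single, ang_eq_extZ, extZ_single]
    rw [hK'add, eeF_add hq hξne, mul_assoc, ih j, mul_smul_comm, ← mul_assoc, hbase,
      smul_mul_assoc, smul_smul, mul_assoc, mul_smul, smul_smul, mul_comm]

include hJ'0 hJ'add hJ'F in
lemma J'F_gen : ∀ (ν : I →₀ ℤ) (j : I), J' ν * F j = F j * J' ν := by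
  intro ν
  induction ν using finsuppZ_induction with
  | h0 => intro j; rw [hJ'0, one_mul, mul_one]
  | hp i ν ih =>
    intro j
    rw [hJ'add, mul_assoc, ih j, ← mul_assoc, hJ'F i j, mul_assoc]
  | hn i ν ih =>
    intro j
    have hbase : J' (-δZ i) * F j = F j * J' (-δZ i) := by
      refine comm_inv ?_ ?_ (hJ'F i j)
      · rw [← hJ'add, add_neg_cancel, hJ'0]
      · rw [← hJ'add, neg_add_cancel, hJ'0]
    rw [hJ'add, mul_assoc, ih j, ← mul_assoc, hbase, mul_assoc]

include hv hββ hξne hK'0 hK'add hK'F in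
lemma K'Fw_gen : ∀ (ν : I →₀ ℤ) (w : FreeMonoid I),
    K' ν * wordProd F w = eewF (qgF cd v βg ξg) ξg w ν • (wordProd F w * K' ν) := by
  intro ν w
  induction w using FreeMonoid.recOn with
  | one => rw [wordProd_one, eewF_one, one_smul, one_mul, mul_one]
  | of_mul i w ih =>
    rw [wordProd_mul, wordProd_of, eewF_mul, eewF_of, ← mul_assoc,
      K'F_gen cd v βg ξg hv hββ hξne F K' hK'0 hK'add hK'F ν i,
      smul_mul_assoc, mul_assoc, ih, mul_smul_comm, smul_smul, mul_assoc, mul_smul]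

include hJ'0 hJ'add hJ'F in
lemma J'Fw_gen : ∀ (ν : I →₀ ℤ) (w : FreeMonoid I),
    J' ν * wordProd F w = wordProd F w * J' ν := by
  intro ν w
  induction w using FreeMonoid.recOn with
  | one => rw [wordProd_one, one_mul, mul_one]
  | of_mul i w ih =>
    rw [wordProd_mul, wordProd_of, ← mul_assoc, J'F_gen F J' hJ'0 hJ'add hJ'F ν i,
      mul_assoc, ih, mul_assoc]

variable (bm : Module.Basis ((I →₀ ℤ) × FreeMonoid I × (I →₀ ℤ)) 𝔽 Am)
variable (hbm : ∀ p, bm p = K' p.1 * wordProd F p.2.1 * J' p.2.2)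

include hv hββ hξne hK'0 hK'add hJ'0 hJ'add hK'J' hK'F hJ'F hbm in
lemma bm_mul (p q : (I →₀ ℤ) × FreeMonoid I × (I →₀ ℤ)) :
    bm p * bm q = (eewF (qgF cd v βg ξg) ξg p.2.1 q.1)⁻¹ •
      bm (p.1 + q.1, p.2.1 * q.2.1, p.2.2 + q.2.2) := by
  have hq := qgF_ne (cd := cd) hv hββ hξne
  obtain ⟨τ₁, w, τ₂⟩ := p
  obtain ⟨σ₁, u, σ₂⟩ := q
  simp only [hbm]
  have hFK : wordProd F w * K' σ₁ = (eewF (qgF cd v βg ξg) ξg w σ₁)⁻¹ •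
      (K' σ₁ * wordProd F w) := by
    rw [K'Fw_gen cd v βg ξg hv hββ hξne F K' hK'0 hK'add hK'F σ₁ w, smul_smul,
      inv_mul_cancel₀ (eewF_ne hq hξne w σ₁), one_smul]
  calc K' τ₁ * wordProd F w * J' τ₂ * (K' σ₁ * wordProd F u * J' σ₂)
      = K' τ₁ * (wordProd F w * ((J' τ₂ * K' σ₁) * (wordProd F u * J' σ₂))) := by
        simp only [mul_assoc]
    _ = K' τ₁ * (wordProd F w * (K' σ₁ * ((J' τ₂ * wordProd F u) * J' σ₂))) := by
        rw [← hK'J']; simp only [mul_assoc]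
    _ = K' τ₁ * ((wordProd F w * K' σ₁) * (wordProd F u * (J' τ₂ * J' σ₂))) := by
        rw [J'Fw_gen F J' hJ'0 hJ'add hJ'F τ₂ u]; simp only [mul_assoc]
    _ = (eewF (qgF cd v βg ξg) ξg w σ₁)⁻¹ •
        (K' (τ₁ + σ₁) * wordProd F (w * u) * J' (τ₂ + σ₂)) := by
        rw [hFK, hK'add, hJ'add, wordProd_mul]
        simp only [smul_mul_assoc, mul_smul_comm, mul_assoc]

end Am
end Main
noncomputable section OpSide
variable {I : Type} [DecidableEq I] {𝔽 : Type} [Field 𝔽]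
variable (cd : CartanDatum I) (v : 𝔽) (βg ξg : I → I → 𝔽)
variable {Ap : Type} [Ring Ap] [Algebra 𝔽 Ap]
variable (E : I → Ap) (K Jp : (I →₀ ℤ) → Ap)
variable (bp : Module.Basis ((I →₀ ℤ) × FreeMonoid I × (I →₀ ℤ)) 𝔽 Ap)
variable (cK' cJ' : (I →₀ ℤ) → (Ap →ₗ[𝔽] Ap))
variable (Sj : I → (Ap →ₗ[𝔽] Ap))
variable (hv : v ≠ 0) (hββ : ∀ i j, βg i j * βg j i = 1) (hξne : ∀ i j, ξg i j ≠ 0)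
variable (hK0 : K 0 = 1) (hJ0 : Jp 0 = 1)
variable (hbp : ∀ p, bp p = K p.1 * wordProd E p.2.1 * Jp p.2.2)
variable (hcK' : ∀ (ν τ₁ τ₂ : I →₀ ℤ) (w : FreeMonoid I),
      cK' ν (K τ₁ * wordProd E w * Jp τ₂)
        = (ang cd v βg ξg τ₁ ν * ang cd v βg ξg (nz (wt w)) ν
            * (extZ ξg ν (nz (wt w)))⁻¹ * extZ ξg ν τ₂) • (K τ₁ * wordProd E w * Jp τ₂))
variable (hcJ' : ∀ (ν τ₁ τ₂ : I →₀ ℤ) (w : FreeMonoid I),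
      cJ' ν (K τ₁ * wordProd E w * Jp τ₂) = K τ₁ * wordProd E w * Jp τ₂)
variable (hSj0 : ∀ (j : I) (τ₁ τ₂ : I →₀ ℤ), Sj j (K τ₁ * Jp τ₂) = 0)
variable (hSjE : ∀ j i : I, Sj j (E i) = if i = j then 1 else 0)
variable (hSjmul : ∀ (j : I) (x y : Ap), Sj j (x * y) = Sj j x * y + cK' (δZ j) x * Sj j y)

include hbp hcJ' in
lemma cJ'_eq_one (ν : I →₀ ℤ) : cJ' ν = (1 : Module.End 𝔽 Ap) :=
  bp.ext fun p => by rw [hbp, hcJ', Module.End.one_apply]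

include hbp hcK' in
lemma cK'_diag (ν τ₁ τ₂ : I →₀ ℤ) (w : FreeMonoid I) :
    cK' ν (bp (τ₁, w, τ₂))
      = eigF (qgF cd v βg ξg) ξg τ₁ (nz (wt w)) τ₂ ν • bp (τ₁, w, τ₂) := by
  rw [hbp]
  exact hcK' ν τ₁ τ₂ w

include hbp hcK' in
lemma cK'_zero : cK' 0 = (1 : Module.End 𝔽 Ap) :=
  bp.ext fun ⟨τ₁, w, τ₂⟩ => by
    rw [cK'_diag cd v βg ξg E K Jp bp cK' hbp hcK', eigF_zeroν, one_smul,
      Module.End.one_apply]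

include hv hββ hξne hbp hcK' in
lemma cK'_add (a b : I →₀ ℤ) : cK' (a + b) = (cK' a * cK' b : Module.End 𝔽 Ap) :=
  bp.ext fun ⟨τ₁, w, τ₂⟩ => by
    have hq := qgF_ne (cd := cd) hv hββ hξne
    have hd := cK'_diag cd v βg ξg E K Jp bp cK' hbp hcK'
    rw [Module.End.mul_apply, hd, hd, map_smul, hd, smul_smul, eigF_addν hq hξne, mul_comm]

include hv hββ hξne hbp hcK' in
lemma cK'_comm (a b : I →₀ ℤ) : (cK' a * cK' b : Module.End 𝔽 Ap) = cK' b * cK' a := by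
  rw [← cK'_add cd v βg ξg E K Jp bp cK' hv hββ hξne hbp hcK', add_comm,
    cK'_add cd v βg ξg E K Jp bp cK' hv hββ hξne hbp hcK']

include hJ0 hSj0 in
lemma Sj_K (j : I) (τ₁ : I →₀ ℤ) : Sj j (K τ₁) = 0 := by
  have h := hSj0 j τ₁ 0
  rwa [hJ0, mul_one] at h

include hK0 hJ0 hSj0 in
lemma Sj_one (j : I) : Sj j (1 : Ap) = 0 := by
  have h := hSj0 j 0 0
  rwa [hK0, hJ0, one_mul] at h

include hJ0 hcK' in
lemma cK'_K (ν τ₁ : I →₀ ℤ) :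
    cK' ν (K τ₁) = eigF (qgF cd v βg ξg) ξg τ₁ 0 0 ν • K τ₁ := by
  have h := hcK' ν τ₁ 0 1
  rwa [wordProd_one, mul_one, hJ0, mul_one, wt_one, nz_zero] at h

include hK0 hJ0 hcK' in
lemma cK'_Ei (ν : I →₀ ℤ) (i : I) :
    cK' ν (E i) = eigF (qgF cd v βg ξg) ξg 0 (δZ i) 0 ν • E i := by
  have h := hcK' ν 0 0 (FreeMonoid.of i)
  rwa [wordProd_of, hK0, one_mul, hJ0, mul_one, nz_wt_of] at h

/-- Multiplying a span membership on the left. -/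
lemma mulLeft_span {A : Type} [Ring A] [Algebra 𝔽 A] (a : A) (s t : Set A)
    (h : ∀ x ∈ s, a * x ∈ Submodule.span 𝔽 t) :
    ∀ y ∈ Submodule.span 𝔽 s, a * y ∈ Submodule.span 𝔽 t := by
  intro y hy
  induction hy using Submodule.span_induction with
  | mem x hx => exact h x hx
  | zero => rw [mul_zero]; exact Submodule.zero_mem _
  | add x y _ _ hx hy => rw [mul_add]; exact Submodule.add_mem _ hx hy
  | smul c x _ hx => rw [mul_smul_comm]; exact Submodule.smul_mem _ _ hx

/-- The set of `E`-words of `ℤ`-weight `μ` times `Jp τ₂`. -/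
def Wset (E : I → Ap) (Jp : (I →₀ ℤ) → Ap) (μ τ₂ : I →₀ ℤ) : Set Ap :=
  {x | ∃ u : FreeMonoid I, nz (wt u) = μ ∧ x = wordProd E u * Jp τ₂}

include hK0 hJ0 hSj0 hSjE hSjmul hcK' in
lemma Sspan (j : I) (τ₂ : I →₀ ℤ) : ∀ w : FreeMonoid I,
    Sj j (wordProd E w * Jp τ₂) ∈
      Submodule.span 𝔽 (Wset E Jp (nz (wt w) - δZ j) τ₂) := by
  intro w
  induction w using FreeMonoid.recOn with
  | one =>
    rw [wordProd_one, one_mul]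
    have h := hSj0 j 0 τ₂
    rw [hK0, one_mul] at h
    rw [h]; exact Submodule.zero_mem _
  | of_mul i w ih =>
    rw [wordProd_mul, wordProd_of, mul_assoc,
      hSjmul j (E i) (wordProd E w * Jp τ₂), hSjE,
      cK'_Ei cd v βg ξg E K Jp cK' hK0 hJ0 hcK']
    refine Submodule.add_mem _ ?_ ?_
    · by_cases hij : i = j
      · rw [if_pos hij, one_mul]
        refine Submodule.subset_span ⟨w, ?_, rfl⟩
        rw [nz_wt_mul, nz_wt_of, hij, add_sub_cancel_left]
      · rw [if_neg hij, zero_mul]; exact Submodule.zero_mem _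
    · rw [smul_mul_assoc]
      refine Submodule.smul_mem _ _ ?_
      refine mulLeft_span (E i) _ _ ?_ _ ih
      rintro x ⟨u, hu, rfl⟩
      rw [← mul_assoc]
      refine Submodule.subset_span ⟨FreeMonoid.of i * u, ?_, by
        rw [wordProd_mul, wordProd_of]⟩
      rw [nz_wt_mul, nz_wt_of, hu, nz_wt_mul, nz_wt_of, add_sub_assoc]

include hv hββ hξne hK0 hJ0 hbp hcK' hSj0 hSjE hSjmul in
lemma KS (ν : I →₀ ℤ) (j : I) :
    (cK' ν * Sj j : Module.End 𝔽 Ap)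
      = (eeF (qgF cd v βg ξg) ξg j ν)⁻¹ • (Sj j * cK' ν : Module.End 𝔽 Ap) := by
  have hq := qgF_ne (cd := cd) hv hββ hξne
  refine bp.ext fun ⟨τ₁, w, τ₂⟩ => ?_
  have hb : bp (τ₁, w, τ₂) = K τ₁ * (wordProd E w * Jp τ₂) := by
    rw [hbp, mul_assoc]
  have hS : Sj j (bp (τ₁, w, τ₂))
      = eigF (qgF cd v βg ξg) ξg τ₁ 0 0 (δZ j) • (K τ₁ * Sj j (wordProd E w * Jp τ₂)) := by
    rw [hb, hSjmul j (K τ₁) (wordProd E w * Jp τ₂),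
      Sj_K K Jp Sj hJ0 hSj0, zero_mul, zero_add,
      cK'_K cd v βg ξg E K Jp cK' hJ0 hcK', smul_mul_assoc]
  have hmem := Sspan cd v βg ξg E K Jp cK' Sj hK0 hJ0 hcK' hSj0 hSjE hSjmul j τ₂ w
  have hdiagW : ∀ x ∈ Submodule.span 𝔽 (Wset E Jp (nz (wt w) - δZ j) τ₂),
      cK' ν (K τ₁ * x)
        = eigF (qgF cd v βg ξg) ξg τ₁ (nz (wt w) - δZ j) τ₂ ν • (K τ₁ * x) := by
    intro x hx
    induction hx using Submodule.span_induction with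
    | mem x hx =>
      obtain ⟨u, hu, rfl⟩ := hx
      rw [← mul_assoc, ← hu]
      have h := hcK' ν τ₁ τ₂ u
      rw [h, ang_eq_extZ]
      rfl
    | zero => rw [mul_zero, map_zero, smul_zero]
    | add x y _ _ hx hy => rw [mul_add, map_add, hx, hy, smul_add]
    | smul c x _ hx => rw [mul_smul_comm, map_smul, hx, smul_comm]
  rw [LinearMap.smul_apply, Module.End.mul_apply, Module.End.mul_apply, hS, map_smul,
    hdiagW _ hmem, cK'_diag cd v βg ξg E K Jp bp cK' hbp hcK', map_smul, hS,
    smul_smul, smul_smul, smul_smul]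
  congr 1
  rw [eigF_ratio hq hξne]
  ring
end OpSide
noncomputable section OpLayer
variable {I : Type} [DecidableEq I] {𝔽 : Type} [Field 𝔽]

/-- scalar for a list of generators -/
def eelF (q ξ : I → I → 𝔽) (l : List I) (ν : I →₀ ℤ) : 𝔽 :=
  (l.map fun j => eeF q ξ j ν).prod

lemma eelF_reverse (q ξ : I → I → 𝔽) (l : List I) (ν : I →₀ ℤ) :
    eelF q ξ l.reverse ν = eelF q ξ l ν := by
  rw [eelF, List.map_reverse, List.prod_reverse]; rfl

lemma eewF_eq_eelF (q ξ : I → I → 𝔽) (w : FreeMonoid I) (ν : I →₀ ℤ) :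
    eewF q ξ w ν = eelF q ξ (FreeMonoid.toList w) ν := rfl

variable {Ap : Type} [Ring Ap] [Algebra 𝔽 Ap]

/-- product of scaled `Sj`'s along a list -/
def lOpF (Sj : I → Module.End 𝔽 Ap) (s : I → 𝔽) (l : List I) : Module.End 𝔽 Ap :=
  (l.map fun j => s j • Sj j).prod

/-- the anti-word operator -/
def sOpF (Sj : I → Module.End 𝔽 Ap) (s : I → 𝔽) (w : FreeMonoid I) : Module.End 𝔽 Ap :=
  lOpF Sj s (FreeMonoid.toList w).reverse

lemma lOpF_nil (Sj : I → Module.End 𝔽 Ap) (s : I → 𝔽) : lOpF Sj s [] = 1 := rfl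

lemma lOpF_cons (Sj : I → Module.End 𝔽 Ap) (s : I → 𝔽) (j : I) (l : List I) :
    lOpF Sj s (j :: l) = (s j • Sj j) * lOpF Sj s l := by
  rw [lOpF, List.map_cons, List.prod_cons, lOpF]

lemma lOpF_append (Sj : I → Module.End 𝔽 Ap) (s : I → 𝔽) (l₁ l₂ : List I) :
    lOpF Sj s (l₁ ++ l₂) = lOpF Sj s l₁ * lOpF Sj s l₂ := by
  rw [lOpF, List.map_append, List.prod_append, lOpF, lOpF]

lemma sOpF_one (Sj : I → Module.End 𝔽 Ap) (s : I → 𝔽) : sOpF Sj s 1 = 1 := rfl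

lemma sOpF_of (Sj : I → Module.End 𝔽 Ap) (s : I → 𝔽) (i : I) :
    sOpF Sj s (FreeMonoid.of i) = s i • Sj i := by
  rw [sOpF, FreeMonoid.toList_of, List.reverse_singleton, lOpF_cons, lOpF_nil, mul_one]

lemma sOpF_mul (Sj : I → Module.End 𝔽 Ap) (s : I → 𝔽) (w u : FreeMonoid I) :
    sOpF Sj s (w * u) = sOpF Sj s u * sOpF Sj s w := by
  rw [sOpF, FreeMonoid.toList_mul, List.reverse_append, lOpF_append, sOpF, sOpF]

variable (cd : CartanDatum I) (v : 𝔽) (βg ξg : I → I → 𝔽)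
variable (cK' : (I →₀ ℤ) → Module.End 𝔽 Ap) (Sj : I → Module.End 𝔽 Ap) (s : I → 𝔽)
variable (hv : v ≠ 0) (hββ : ∀ i j, βg i j * βg j i = 1) (hξne : ∀ i j, ξg i j ≠ 0)
variable (hKS : ∀ (ν : I →₀ ℤ) (j : I),
  (cK' ν * Sj j : Module.End 𝔽 Ap) = (eeF (qgF cd v βg ξg) ξg j ν)⁻¹ • (Sj j * cK' ν))

include hKS in
lemma cK'_lOp (ν : I →₀ ℤ) : ∀ l : List I,
    (cK' ν * lOpF Sj s l : Module.End 𝔽 Ap)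
      = (eelF (qgF cd v βg ξg) ξg l ν)⁻¹ • (lOpF Sj s l * cK' ν) := by
  intro l
  induction l with
  | nil => rw [lOpF_nil, mul_one, one_mul, eelF, List.map_nil, List.prod_nil, inv_one, one_smul]
  | cons j l ih =>
    have hc : eelF (qgF cd v βg ξg) ξg (j :: l) ν
        = eeF (qgF cd v βg ξg) ξg j ν * eelF (qgF cd v βg ξg) ξg l ν := by
      rw [eelF, List.map_cons, List.prod_cons]; rfl
    rw [lOpF_cons, ← mul_assoc, mul_smul_comm, hKS, smul_mul_assoc, smul_mul_assoc,
      mul_assoc, ih, hc, mul_inv]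
    simp only [mul_smul_comm, smul_mul_assoc, smul_smul, mul_assoc]
    congr 1
    ring

include hKS in
lemma cK'_sOp (ν : I →₀ ℤ) (w : FreeMonoid I) :
    (cK' ν * sOpF Sj s w : Module.End 𝔽 Ap)
      = (eewF (qgF cd v βg ξg) ξg w ν)⁻¹ • (sOpF Sj s w * cK' ν) := by
  rw [sOpF, cK'_lOp cd v βg ξg cK' Sj s hKS, eelF_reverse, eewF_eq_eelF]

end OpLayer
noncomputable section AdjE
variable {I : Type} [DecidableEq I] {𝔽 : Type} [Field 𝔽]
variable (cd : CartanDatum I) (v : 𝔽) (βg ξg : I → I → 𝔽)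
variable {Ap : Type} [Ring Ap] [Algebra 𝔽 Ap]
variable (E : I → Ap) (K Jp : (I →₀ ℤ) → Ap)
variable (cK' : (I →₀ ℤ) → (Ap →ₗ[𝔽] Ap)) (Sj : I → (Ap →ₗ[𝔽] Ap))
variable (hK0 : K 0 = 1) (hJ0 : Jp 0 = 1)
variable (hcK' : ∀ (ν τ₁ τ₂ : I →₀ ℤ) (w : FreeMonoid I),
      cK' ν (K τ₁ * wordProd E w * Jp τ₂)
        = (ang cd v βg ξg τ₁ ν * ang cd v βg ξg (nz (wt w)) ν
            * (extZ ξg ν (nz (wt w)))⁻¹ * extZ ξg ν τ₂) • (K τ₁ * wordProd E w * Jp τ₂))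
variable (hSj0 : ∀ (j : I) (τ₁ τ₂ : I →₀ ℤ), Sj j (K τ₁ * Jp τ₂) = 0)
variable (hSjE : ∀ j i : I, Sj j (E i) = if i = j then 1 else 0)
variable (hSjmul : ∀ (j : I) (x y : Ap), Sj j (x * y) = Sj j x * y + cK' (δZ j) x * Sj j y)

lemma word_mem_adjE : ∀ w : FreeMonoid I, wordProd E w ∈ Algebra.adjoin 𝔽 (Set.range E) := by
  intro w
  induction w using FreeMonoid.recOn with
  | one => rw [wordProd_one]; exact one_mem _
  | of_mul i w ih =>
    rw [wordProd_mul, wordProd_of]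
    exact mul_mem (Algebra.subset_adjoin ⟨i, rfl⟩) ih

lemma span_words_le_adjE :
    Submodule.span 𝔽 (Set.range (wordProd E))
      ≤ Subalgebra.toSubmodule (Algebra.adjoin 𝔽 (Set.range E)) := by
  rw [Submodule.span_le]
  rintro x ⟨w, rfl⟩
  exact word_mem_adjE E w

lemma adjE_le_span_words :
    ∀ x ∈ Algebra.adjoin 𝔽 (Set.range E),
      x ∈ Submodule.span 𝔽 (Set.range (wordProd E)) := by
  have hmul2 : ∀ x ∈ Submodule.span 𝔽 (Set.range (wordProd E)),
      ∀ y ∈ Submodule.span 𝔽 (Set.range (wordProd E)),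
        x * y ∈ Submodule.span 𝔽 (Set.range (wordProd E)) := by
    intro x hx
    induction hx using Submodule.span_induction with
    | mem x hx =>
      obtain ⟨w, rfl⟩ := hx
      intro y hy
      induction hy using Submodule.span_induction with
      | mem y hy =>
        obtain ⟨u, rfl⟩ := hy
        exact Submodule.subset_span ⟨w * u, wordProd_mul E w u⟩
      | zero => rw [mul_zero]; exact Submodule.zero_mem _
      | add y z _ _ hy hz => rw [mul_add]; exact Submodule.add_mem _ hy hz
      | smul c y _ hy => rw [mul_smul_comm]; exact Submodule.smul_mem _ _ hy
    | zero => intro y _; rw [zero_mul]; exact Submodule.zero_mem _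
    | add x z _ _ hx hz => intro y hy; rw [add_mul]; exact Submodule.add_mem _ (hx y hy) (hz y hy)
    | smul c x _ hx => intro y hy; rw [smul_mul_assoc]; exact Submodule.smul_mem _ _ (hx y hy)
  intro x hx
  induction hx using Algebra.adjoin_induction with
  | mem x hx =>
    obtain ⟨i, rfl⟩ := hx
    exact Submodule.subset_span ⟨FreeMonoid.of i, wordProd_of E i⟩
  | algebraMap r =>
    rw [Algebra.algebraMap_eq_smul_one]
    exact Submodule.smul_mem _ _ (Submodule.subset_span ⟨1, rfl⟩)
  | add x y _ _ hx hy => exact Submodule.add_mem _ hx hy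
  | mul x y _ _ hx hy => exact hmul2 x hx y hy

include hK0 hJ0 hcK' in
lemma cK'_adjE (ν : I →₀ ℤ) :
    ∀ x ∈ Algebra.adjoin 𝔽 (Set.range E), cK' ν x ∈ Algebra.adjoin 𝔽 (Set.range E) := by
  have key : ∀ y ∈ Submodule.span 𝔽 (Set.range (wordProd E)),
      cK' ν y ∈ Submodule.span 𝔽 (Set.range (wordProd E)) := by
    intro y hy
    induction hy using Submodule.span_induction with
    | mem y hy =>
      obtain ⟨w, rfl⟩ := hy
      have h := hcK' ν 0 0 w
      rw [hK0, hJ0, one_mul, mul_one] at h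
      rw [h]
      exact Submodule.smul_mem _ _ (Submodule.subset_span ⟨w, rfl⟩)
    | zero => rw [map_zero]; exact Submodule.zero_mem _
    | add y z _ _ hy hz => rw [map_add]; exact Submodule.add_mem _ hy hz
    | smul c y _ hy => rw [map_smul]; exact Submodule.smul_mem _ _ hy
  intro x hx
  exact span_words_le_adjE E (key x (adjE_le_span_words E x hx))

include hK0 hJ0 hcK' hSj0 hSjE hSjmul in
lemma Sj_adjE (j : I) :
    ∀ x ∈ Algebra.adjoin 𝔽 (Set.range E), Sj j x ∈ Algebra.adjoin 𝔽 (Set.range E) := by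
  intro x hx
  induction hx using Algebra.adjoin_induction with
  | mem x hx =>
    obtain ⟨i, rfl⟩ := hx
    rw [hSjE]
    split
    · exact one_mem _
    · exact zero_mem _
  | algebraMap r =>
    rw [Algebra.algebraMap_eq_smul_one, map_smul,
      Sj_one K Jp Sj hK0 hJ0 hSj0, smul_zero]
    exact zero_mem _
  | add x y hx hy ihx ihy => rw [map_add]; exact add_mem ihx ihy
  | mul x y hx hy ihx ihy =>
    rw [hSjmul]
    exact add_mem (mul_mem ihx hy) (mul_mem (cK'_adjE cd v βg ξg E K Jp cK' hK0 hJ0 hcK'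
      (δZ j) x hx) ihy)

end AdjE
theorem exists_unique_rho_minus_and_sweedler
    {I : Type} [Fintype I] [DecidableEq I] (cd : CartanDatum I)
    {𝔽 : Type} [Field 𝔽] [CharZero 𝔽] (v : 𝔽) (hv : Transcendental ℚ v)
    (βg ξg : I → I → 𝔽)
    (hββ : ∀ i j, βg i j * βg j i = 1) (hβii : ∀ i, βg i i = 1)
    (hξsymm : ∀ i j, ξg i j = ξg j i) (hξne : ∀ i j, ξg i j ≠ 0)
    {Ap : Type} [Ring Ap] [Algebra 𝔽 Ap]
    (E : I → Ap) (K Jp : (I →₀ ℤ) → Ap)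
    (hK0 : K 0 = 1) (hKadd : ∀ a b, K (a + b) = K a * K b)
    (hJ0 : Jp 0 = 1) (hJadd : ∀ a b, Jp (a + b) = Jp a * Jp b)
    (hKJ : ∀ a b, K a * Jp b = Jp b * K a)
    (hKE : ∀ i j : I, K (δZ i) * E j = ang cd v βg ξg (δZ i) (δZ j) • (E j * K (δZ i)))
    (hJE : ∀ i j : I, Jp (δZ i) * E j = ξg j i • (E j * Jp (δZ i)))
    (bp : Module.Basis ((I →₀ ℤ) × FreeMonoid I × (I →₀ ℤ)) 𝔽 Ap)
    (hbp : ∀ p, bp p = K p.1 * wordProd E p.2.1 * Jp p.2.2)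
    {Am : Type} [Ring Am] [Algebra 𝔽 Am]
    (F : I → Am) (K' J' : (I →₀ ℤ) → Am)
    (hK'0 : K' 0 = 1) (hK'add : ∀ a b, K' (a + b) = K' a * K' b)
    (hJ'0 : J' 0 = 1) (hJ'add : ∀ a b, J' (a + b) = J' a * J' b)
    (hK'J' : ∀ a b, K' a * J' b = J' b * K' a)
    (hK'F : ∀ i j : I, K' (δZ i) * F j
      = (ang cd v βg ξg (δZ j) (δZ i) * (ξg i j)⁻¹) • (F j * K' (δZ i)))
    (hJ'F : ∀ i j : I, J' (δZ i) * F j = F j * J' (δZ i))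
    (bm : Module.Basis ((I →₀ ℤ) × FreeMonoid I × (I →₀ ℤ)) 𝔽 Am)
    (hbm : ∀ p, bm p = K' p.1 * wordProd F p.2.1 * J' p.2.2)
    (cK' cJ' : (I →₀ ℤ) → (Ap →ₗ[𝔽] Ap))
    (hcK' : ∀ (ν τ₁ τ₂ : I →₀ ℤ) (w : FreeMonoid I),
      cK' ν (K τ₁ * wordProd E w * Jp τ₂)
        = (ang cd v βg ξg τ₁ ν * ang cd v βg ξg (nz (wt w)) ν
            * (extZ ξg ν (nz (wt w)))⁻¹ * extZ ξg ν τ₂) • (K τ₁ * wordProd E w * Jp τ₂))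
    (hcJ' : ∀ (ν τ₁ τ₂ : I →₀ ℤ) (w : FreeMonoid I),
      cJ' ν (K τ₁ * wordProd E w * Jp τ₂) = K τ₁ * wordProd E w * Jp τ₂)
    (Sj : I → (Ap →ₗ[𝔽] Ap))
    (hSj0 : ∀ (j : I) (τ₁ τ₂ : I →₀ ℤ), Sj j (K τ₁ * Jp τ₂) = 0)
    (hSjE : ∀ j i : I, Sj j (E i) = if i = j then 1 else 0)
    (hSjmul : ∀ (j : I) (x y : Ap), Sj j (x * y) = Sj j x * y + cK' (δZ j) x * Sj j y)
    (G : (I →₀ ℕ) → 𝔽) (hG2 : ∀ i, G (δN i) ^ 2 = ξg i i)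
    (hGadd : ∀ ν₁ ν₂, G (ν₁ + ν₂) = G ν₁ * G ν₂ * extZ ξg (nz ν₂) (nz ν₁))
    (Δm : Am →ₐ[𝔽] (Am ⊗[𝔽] Am))
    (hΔmF : ∀ i, Δm (F i) = J' (δZ i) ⊗ₜ[𝔽] F i + F i ⊗ₜ[𝔽] K' (δZ i))
    (hΔmK' : ∀ ν, Δm (K' ν) = K' ν ⊗ₜ[𝔽] K' ν) (hΔmJ' : ∀ ν, Δm (J' ν) = J' ν ⊗ₜ[𝔽] J' ν)
    :
    (∃! ρm : Am →ₗ[𝔽] Module.End 𝔽 Ap,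
      (∀ x y : Am, ρm (x * y) = ρm y * ρm x) ∧ ρm 1 = 1 ∧
      (∀ j : I, ρm (F j) = (G (δN j) * (v ^ (-(cd.d j)) - v ^ (cd.d j))⁻¹) • Sj j) ∧
      (∀ i : I, ρm (K' (δZ i)) = cK' (δZ i)) ∧
      (∀ i : I, ρm (K' (-(δZ i))) = cK' (-(δZ i))) ∧
      (∀ i : I, ρm (J' (δZ i)) = cJ' (δZ i)) ∧
      (∀ i : I, ρm (J' (-(δZ i))) = cJ' (-(δZ i)))) ∧
    (∀ ρm : Am →ₗ[𝔽] Module.End 𝔽 Ap,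
      ((∀ x y : Am, ρm (x * y) = ρm y * ρm x) ∧ ρm 1 = 1 ∧
       (∀ j : I, ρm (F j) = (G (δN j) * (v ^ (-(cd.d j)) - v ^ (cd.d j))⁻¹) • Sj j) ∧
       (∀ i : I, ρm (K' (δZ i)) = cK' (δZ i)) ∧
       (∀ i : I, ρm (K' (-(δZ i))) = cK' (-(δZ i))) ∧
       (∀ i : I, ρm (J' (δZ i)) = cJ' (δZ i)) ∧
       (∀ i : I, ρm (J' (-(δZ i))) = cJ' (-(δZ i)))) →
      ∀ y ∈ Algebra.adjoin 𝔽 (Set.range F), ∀ x' x'', x' ∈ Algebra.adjoin 𝔽 (Set.range E) →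
        x'' ∈ Algebra.adjoin 𝔽 (Set.range E) →
        ∀ (n : ℕ) (a b : Fin n → Am), Δm y = ∑ k, a k ⊗ₜ[𝔽] b k →
        ρm y (x' * x'') = ∑ k, ρm (b k) x' * ρm (a k) x'') := by
  classical
  -- basic nonvanishing
  have hv' : v ≠ 0 := by
    intro h
    exact hv (h ▸ isAlgebraic_zero)
  have hq : ∀ i j, qgF cd v βg ξg i j ≠ 0 := qgF_ne hv' hββ hξne
  -- the scalar family
  set s : I → 𝔽 := fun j => G (δN j) * (v ^ (-(cd.d j)) - v ^ (cd.d j))⁻¹ with hs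
  -- key operator facts
  have hKS : ∀ (ν : I →₀ ℤ) (j : I),
      (cK' ν * Sj j : Module.End 𝔽 Ap)
        = (eeF (qgF cd v βg ξg) ξg j ν)⁻¹ • (Sj j * cK' ν : Module.End 𝔽 Ap) :=
    KS cd v βg ξg E K Jp bp cK' Sj hv' hββ hξne hK0 hJ0 hbp hcK' hSj0 hSjE hSjmul
  have cK0 : cK' 0 = (1 : Module.End 𝔽 Ap) := cK'_zero cd v βg ξg E K Jp bp cK' hbp hcK'
  have cKadd : ∀ a b, cK' (a + b) = (cK' a * cK' b : Module.End 𝔽 Ap) :=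
    cK'_add cd v βg ξg E K Jp bp cK' hv' hββ hξne hbp hcK'
  have cJ1 : ∀ ν, cJ' ν = (1 : Module.End 𝔽 Ap) := cJ'_eq_one E K Jp bp cJ' hbp hcJ'
  have hcKsOp : ∀ (ν : I →₀ ℤ) (w : FreeMonoid I),
      (cK' ν * sOpF Sj s w : Module.End 𝔽 Ap)
        = (eewF (qgF cd v βg ξg) ξg w ν)⁻¹ • (sOpF Sj s w * cK' ν) :=
    cK'_sOp cd v βg ξg cK' Sj s hKS
  -- the candidate map
  set op : ((I →₀ ℤ) × FreeMonoid I × (I →₀ ℤ)) → Module.End 𝔽 Ap :=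
    fun p => sOpF Sj s p.2.1 * cK' p.1 with hop
  set ρ0 : Am →ₗ[𝔽] Module.End 𝔽 Ap := bm.constr 𝔽 op with hρ0
  have hρb : ∀ p, ρ0 (bm p) = op p := fun p => bm.constr_basis 𝔽 op p
  -- values on generators
  have hone : ρ0 (1 : Am) = 1 := by
    have h1 : (1 : Am) = bm (0, 1, 0) := by
      rw [hbm]; simp only [wordProd_one, hK'0, hJ'0, mul_one]
    rw [h1, hρb, hop]
    show sOpF Sj s 1 * cK' 0 = 1
    rw [sOpF_one, cK0, one_mul]
  have hFval : ∀ j, ρ0 (F j) = s j • Sj j := by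
    intro j
    have h1 : F j = bm (0, FreeMonoid.of j, 0) := by
      rw [hbm]; simp only [wordProd_of, hK'0, hJ'0, mul_one, one_mul]
    rw [h1, hρb, hop]
    show sOpF Sj s (FreeMonoid.of j) * cK' 0 = s j • Sj j
    rw [sOpF_of, cK0, mul_one]
  have hKval : ∀ ν, ρ0 (K' ν) = cK' ν := by
    intro ν
    have h1 : K' ν = bm (ν, 1, 0) := by
      rw [hbm]; simp only [wordProd_one, hJ'0, mul_one]
    rw [h1, hρb, hop]
    show sOpF Sj s 1 * cK' ν = cK' ν
    rw [sOpF_one, one_mul]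
  have hJval : ∀ ν, ρ0 (J' ν) = cJ' ν := by
    intro ν
    have h1 : J' ν = bm (0, 1, ν) := by
      rw [hbm]; simp only [wordProd_one, hK'0, mul_one, one_mul]
    rw [h1, hρb, hop, cJ1]
    show sOpF Sj s 1 * cK' 0 = 1
    rw [sOpF_one, cK0, one_mul]
  -- anti-multiplicativity
  have hbasis : ∀ p q, ρ0 (bm p * bm q) = ρ0 (bm q) * ρ0 (bm p) := by
    intro p q
    rw [bm_mul cd v βg ξg hv' hββ hξne F K' J' hK'0 hK'add hJ'0 hJ'add hK'J' hK'F hJ'F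
      bm hbm p q, map_smul, hρb, hρb, hρb]
    obtain ⟨τ₁, w, τ₂⟩ := p
    obtain ⟨σ₁, u, σ₂⟩ := q
    show (eewF (qgF cd v βg ξg) ξg w σ₁)⁻¹ • (sOpF Sj s (w * u) * cK' (τ₁ + σ₁))
      = (sOpF Sj s u * cK' σ₁) * (sOpF Sj s w * cK' τ₁)
    calc (eewF (qgF cd v βg ξg) ξg w σ₁)⁻¹ • (sOpF Sj s (w * u) * cK' (τ₁ + σ₁))
        = (eewF (qgF cd v βg ξg) ξg w σ₁)⁻¹ •
            (sOpF Sj s u * (sOpF Sj s w * (cK' σ₁ * cK' τ₁))) := by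
          rw [sOpF_mul, add_comm τ₁ σ₁, cKadd]
          simp only [mul_assoc]
      _ = sOpF Sj s u * ((cK' σ₁ * sOpF Sj s w) * cK' τ₁) := by
          rw [hcKsOp σ₁ w]
          simp only [smul_mul_assoc, mul_smul_comm, mul_assoc]
      _ = (sOpF Sj s u * cK' σ₁) * (sOpF Sj s w * cK' τ₁) := by
          simp only [mul_assoc]
  have hanti : ∀ x y : Am, ρ0 (x * y) = ρ0 y * ρ0 x := by
    have h1 : ∀ q x, ρ0 (x * bm q) = ρ0 (bm q) * ρ0 x := by
      intro q
      have e : (ρ0 ∘ₗ LinearMap.mulRight 𝔽 (bm q))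
          = (LinearMap.mulLeft 𝔽 (ρ0 (bm q))) ∘ₗ ρ0 :=
        bm.ext fun p => by
          simp only [LinearMap.comp_apply, LinearMap.mulRight_apply, LinearMap.mulLeft_apply]
          exact hbasis p q
      intro x
      have := LinearMap.congr_fun e x
      simpa only [LinearMap.comp_apply, LinearMap.mulRight_apply,
        LinearMap.mulLeft_apply] using this
    intro x y
    have e2 : (ρ0 ∘ₗ LinearMap.mulLeft 𝔽 x) = (LinearMap.mulRight 𝔽 (ρ0 x)) ∘ₗ ρ0 :=
      bm.ext fun q => by
        simp only [LinearMap.comp_apply, LinearMap.mulLeft_apply, LinearMap.mulRight_apply]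
        exact h1 q x
    have := LinearMap.congr_fun e2 y
    simpa only [LinearMap.comp_apply, LinearMap.mulLeft_apply,
      LinearMap.mulRight_apply] using this
  -- the property bundle
  have hprops : (∀ x y : Am, ρ0 (x * y) = ρ0 y * ρ0 x) ∧ ρ0 1 = 1 ∧
      (∀ j : I, ρ0 (F j) = (G (δN j) * (v ^ (-(cd.d j)) - v ^ (cd.d j))⁻¹) • Sj j) ∧
      (∀ i : I, ρ0 (K' (δZ i)) = cK' (δZ i)) ∧
      (∀ i : I, ρ0 (K' (-(δZ i))) = cK' (-(δZ i))) ∧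
      (∀ i : I, ρ0 (J' (δZ i)) = cJ' (δZ i)) ∧
      (∀ i : I, ρ0 (J' (-(δZ i))) = cJ' (-(δZ i))) :=
    ⟨hanti, hone, fun j => hFval j, fun i => hKval _, fun i => hKval _,
      fun i => hJval _, fun i => hJval _⟩
  -- the Sweedler property, for any map satisfying the bundle
  have hSweedler : ∀ ρm : Am →ₗ[𝔽] Module.End 𝔽 Ap,
      ((∀ x y : Am, ρm (x * y) = ρm y * ρm x) ∧ ρm 1 = 1 ∧
       (∀ j : I, ρm (F j) = (G (δN j) * (v ^ (-(cd.d j)) - v ^ (cd.d j))⁻¹) • Sj j) ∧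
       (∀ i : I, ρm (K' (δZ i)) = cK' (δZ i)) ∧
       (∀ i : I, ρm (K' (-(δZ i))) = cK' (-(δZ i))) ∧
       (∀ i : I, ρm (J' (δZ i)) = cJ' (δZ i)) ∧
       (∀ i : I, ρm (J' (-(δZ i))) = cJ' (-(δZ i)))) →
      ∀ y ∈ Algebra.adjoin 𝔽 (Set.range F), ∀ x' x'', x' ∈ Algebra.adjoin 𝔽 (Set.range E) →
        x'' ∈ Algebra.adjoin 𝔽 (Set.range E) →
        ∀ (n : ℕ) (a b : Fin n → Am), Δm y = ∑ k, a k ⊗ₜ[𝔽] b k →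
        ρm y (x' * x'') = ∑ k, ρm (b k) x' * ρm (a k) x'' := by
    rintro ρm ⟨hanti', hone', hF', hKp', hKm', hJp', hJm'⟩
    have hmk : ∀ u u' : Ap, ∃ μ : (Am ⊗[𝔽] Am) →ₗ[𝔽] Ap,
        ∀ c d : Am, μ (c ⊗ₜ[𝔽] d) = ρm d u * ρm c u' := by
      intro u u'
      refine ⟨TensorProduct.lift (LinearMap.mk₂ 𝔽 (fun c d => ρm d u * ρm c u')
        ?_ ?_ ?_ ?_), fun c d => ?_⟩
      · intro c c' d; rw [map_add, LinearMap.add_apply, mul_add]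
      · intro r c d; rw [map_smul, LinearMap.smul_apply, mul_smul_comm]
      · intro c d d'; rw [map_add, LinearMap.add_apply, add_mul]
      · intro r c d; rw [map_smul, LinearMap.smul_apply, smul_mul_assoc]
      · rw [TensorProduct.lift.tmul, LinearMap.mk₂_apply]
    choose μm hμt using hmk
    have hμsum : ∀ {γ : Type} (u u' : Ap) (f g : γ → Am) (l : List γ),
        μm u u' ((l.map fun x => f x ⊗ₜ[𝔽] g x).sum)
          = (l.map fun x => ρm (g x) u * ρm (f x) u').sum := by
      intro γ u u' f g l
      induction l with
      | nil => simp
      | cons p l ih => simp only [List.map_cons, List.sum_cons, map_add, hμt, ih]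
    have hflat : ∀ {γ δ : Type} (l₁ : List γ) (l₂ : List δ) (f : γ → δ → Ap),
        ((l₁ ×ˢ l₂).map fun pq => f pq.1 pq.2).sum
          = (l₁.map fun p => ((l₂.map fun q => f p q).sum)).sum := by
      intro γ δ l₁ l₂ f
      induction l₁ with
      | nil => simp
      | cons p l₁ ih =>
        simp [List.product_cons, List.map_append, List.sum_append, ih,
          List.map_map, Function.comp_def]
    have htmulsum : ∀ {δ : Type} (x y : Am) (l₂ : List δ) (f' g' : δ → Am),
        (x ⊗ₜ[𝔽] y) * ((l₂.map fun q => f' q ⊗ₜ[𝔽] g' q).sum)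
          = (l₂.map fun q => (x * f' q) ⊗ₜ[𝔽] (y * g' q)).sum := by
      intro δ x y l₂ f' g'
      induction l₂ with
      | nil => simp
      | cons q l₂ ih =>
        simp only [List.map_cons, List.sum_cons, mul_add, ih,
          Algebra.TensorProduct.tmul_mul_tmul]
    have hmulsum : ∀ {γ δ : Type} (l₁ : List γ) (l₂ : List δ) (f g : γ → Am) (f' g' : δ → Am),
        ((l₁.map fun x => f x ⊗ₜ[𝔽] g x).sum) * ((l₂.map fun x => f' x ⊗ₜ[𝔽] g' x).sum)
          = ((l₁ ×ˢ l₂).map fun pq => (f pq.1 * f' pq.2) ⊗ₜ[𝔽] (g pq.1 * g' pq.2)).sum := by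
      intro γ δ l₁ l₂ f g f' g'
      induction l₁ with
      | nil => simp
      | cons p l₁ ih =>
        simp only [List.map_cons, List.sum_cons, List.product_cons, List.map_append,
          List.sum_append, add_mul, ih, List.map_map, Function.comp_def, htmulsum]
    have hcKadj : ∀ ν, ∀ x ∈ Algebra.adjoin 𝔽 (Set.range E), cK' ν x ∈ Algebra.adjoin 𝔽 (Set.range E) :=
      fun ν => cK'_adjE cd v βg ξg E K Jp cK' hK0 hJ0 hcK' ν
    have hSjadj : ∀ j, ∀ x ∈ Algebra.adjoin 𝔽 (Set.range E), Sj j x ∈ Algebra.adjoin 𝔽 (Set.range E) :=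
      fun j => Sj_adjE cd v βg ξg E K Jp cK' Sj hK0 hJ0 hcK' hSj0 hSjE hSjmul j
    have hPmul : ∀ c d : Am,
        (∀ x ∈ Algebra.adjoin 𝔽 (Set.range E), ρm c x ∈ Algebra.adjoin 𝔽 (Set.range E)) →
        (∀ x ∈ Algebra.adjoin 𝔽 (Set.range E), ρm d x ∈ Algebra.adjoin 𝔽 (Set.range E)) →
        ∀ x ∈ Algebra.adjoin 𝔽 (Set.range E), ρm (c * d) x ∈ Algebra.adjoin 𝔽 (Set.range E) := by
      intro c d hc hd x hx
      rw [hanti', Module.End.mul_apply]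
      exact hd _ (hc x hx)
    have key : ∀ y ∈ Algebra.adjoin 𝔽 (Set.range F),
        (∀ x ∈ Algebra.adjoin 𝔽 (Set.range E), ρm y x ∈ Algebra.adjoin 𝔽 (Set.range E)) ∧
        (∀ u u', u ∈ Algebra.adjoin 𝔽 (Set.range E) → u' ∈ Algebra.adjoin 𝔽 (Set.range E) →
          ρm y (u * u') = μm u u' (Δm y)) ∧
        (∃ l : List (Am × Am), Δm y = (l.map fun p => p.1 ⊗ₜ[𝔽] p.2).sum ∧
          ∀ p ∈ l, (∀ x ∈ Algebra.adjoin 𝔽 (Set.range E),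
              ρm p.1 x ∈ Algebra.adjoin 𝔽 (Set.range E)) ∧
            (∀ x ∈ Algebra.adjoin 𝔽 (Set.range E),
              ρm p.2 x ∈ Algebra.adjoin 𝔽 (Set.range E))) := by
      intro y hy
      induction hy using Algebra.adjoin_induction with
      | mem z hz =>
        obtain ⟨j, rfl⟩ := hz
        have hPF : ∀ x ∈ Algebra.adjoin 𝔽 (Set.range E),
            ρm (F j) x ∈ Algebra.adjoin 𝔽 (Set.range E) := by
          intro x hx
          rw [hF' j, LinearMap.smul_apply]
          exact Subalgebra.smul_mem _ (hSjadj j x hx) _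
        have hPJ : ∀ x ∈ Algebra.adjoin 𝔽 (Set.range E),
            ρm (J' (δZ j)) x ∈ Algebra.adjoin 𝔽 (Set.range E) := by
          intro x hx
          rw [hJp' j, cJ1, Module.End.one_apply]
          exact hx
        have hPK : ∀ x ∈ Algebra.adjoin 𝔽 (Set.range E),
            ρm (K' (δZ j)) x ∈ Algebra.adjoin 𝔽 (Set.range E) := by
          intro x hx
          rw [hKp' j]
          exact hcKadj _ x hx
        refine ⟨hPF, ?_, ⟨[(J' (δZ j), F j), (F j, K' (δZ j))], ?_, ?_⟩⟩
        · intro u u' hu hu'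
          rw [hΔmF j, map_add, hμt, hμt, hF' j, hJp' j, cJ1, hKp' j]
          simp only [LinearMap.smul_apply, Module.End.one_apply, hSjmul j u u', smul_add,
            smul_mul_assoc, mul_smul_comm]
        · simp [hΔmF j]
        · intro p hp
          simp only [List.mem_cons, List.mem_singleton, List.not_mem_nil, or_false] at hp
          rcases hp with rfl | rfl
          · exact ⟨hPJ, hPF⟩
          · exact ⟨hPF, hPK⟩
      | algebraMap r =>
        have hρa : ρm (algebraMap 𝔽 Am r) = r • (1 : Module.End 𝔽 Ap) := by
          rw [Algebra.algebraMap_eq_smul_one, map_smul, hone']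
        have hP1 : ∀ x ∈ Algebra.adjoin 𝔽 (Set.range E),
            ρm (1 : Am) x ∈ Algebra.adjoin 𝔽 (Set.range E) := by
          intro x hx; rw [hone', Module.End.one_apply]; exact hx
        have hPa : ∀ x ∈ Algebra.adjoin 𝔽 (Set.range E),
            ρm (algebraMap 𝔽 Am r) x ∈ Algebra.adjoin 𝔽 (Set.range E) := by
          intro x hx
          rw [hρa, LinearMap.smul_apply, Module.End.one_apply]
          exact Subalgebra.smul_mem _ hx _
        refine ⟨hPa, ?_, ⟨[(algebraMap 𝔽 Am r, 1)], ?_, ?_⟩⟩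
        · intro u u' hu hu'
          rw [AlgHom.commutes, Algebra.TensorProduct.algebraMap_apply, hμt, hone', hρa]
          simp only [Module.End.one_apply, LinearMap.smul_apply, mul_smul_comm]
        · rw [AlgHom.commutes, Algebra.TensorProduct.algebraMap_apply]
          simp
        · intro p hp
          simp only [List.mem_singleton] at hp
          subst hp
          exact ⟨hPa, hP1⟩
      | add y z hy hz ihy ihz =>
        obtain ⟨P1y, P2y, ly, hly, hlyP⟩ := ihy
        obtain ⟨P1z, P2z, lz, hlz, hlzP⟩ := ihz
        refine ⟨?_, ?_, ⟨ly ++ lz, ?_, ?_⟩⟩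
        · intro x hx
          rw [map_add, LinearMap.add_apply]
          exact add_mem (P1y x hx) (P1z x hx)
        · intro u u' hu hu'
          rw [map_add, LinearMap.add_apply, P2y u u' hu hu', P2z u u' hu hu',
            map_add, map_add]
        · rw [map_add, hly, hlz, List.map_append, List.sum_append]
        · intro p hp
          rcases List.mem_append.1 hp with h | h
          exacts [hlyP p h, hlzP p h]
      | mul y z hy hz ihy ihz =>
        obtain ⟨P1y, P2y, ly, hly, hlyP⟩ := ihy
        obtain ⟨P1z, P2z, lz, hlz, hlzP⟩ := ihz
        have hΔyz : Δm (y * z) = ((ly ×ˢ lz).map fun pq =>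
            (pq.1.1 * pq.2.1) ⊗ₜ[𝔽] (pq.1.2 * pq.2.2)).sum := by
          rw [map_mul, hly, hlz]
          simpa using hmulsum ly lz Prod.fst Prod.snd Prod.fst Prod.snd
        refine ⟨hPmul y z P1y P1z, ?_,
          ⟨(ly ×ˢ lz).map fun pq => (pq.1.1 * pq.2.1, pq.1.2 * pq.2.2), ?_, ?_⟩⟩
        · intro u u' hu hu'
          calc ρm (y * z) (u * u') = ρm z (ρm y (u * u')) := by
                rw [hanti', Module.End.mul_apply]
            _ = (ly.map fun p => ρm z (ρm p.2 u * ρm p.1 u')).sum := by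
                rw [P2y u u' hu hu', hly, hμsum, map_list_sum, List.map_map]
                rfl
            _ = (ly.map fun p =>
                ((lz.map fun q => ρm (p.2 * q.2) u * ρm (p.1 * q.1) u').sum)).sum := by
                refine congrArg List.sum (List.map_congr_left fun p hp => ?_)
                obtain ⟨hp1, hp2⟩ := hlyP p hp
                rw [P2z _ _ (hp2 u hu) (hp1 u' hu'), hlz, hμsum]
                refine congrArg List.sum (List.map_congr_left fun q hq => ?_)
                rw [hanti', hanti', Module.End.mul_apply, Module.End.mul_apply]
            _ = μm u u' (Δm (y * z)) := by
                rw [hΔyz, hμsum u u' (fun pq => pq.1.1 * pq.2.1)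
                  (fun pq => pq.1.2 * pq.2.2) (ly ×ˢ lz),
                  hflat ly lz (fun p q => ρm (p.2 * q.2) u * ρm (p.1 * q.1) u')]
        · rw [hΔyz, List.map_map]
          rfl
        · intro p hp
          obtain ⟨pq, hpq, rfl⟩ := List.mem_map.1 hp
          obtain ⟨h1, h2⟩ := List.mem_product.1 hpq
          exact ⟨hPmul _ _ (hlyP pq.1 h1).1 (hlzP pq.2 h2).1,
            hPmul _ _ (hlyP pq.1 h1).2 (hlzP pq.2 h2).2⟩
    intro y hy x' x'' hx' hx'' n a b hΔ
    obtain ⟨-, hSwd, -⟩ := key y hy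
    rw [hSwd x' x'' hx' hx'', hΔ, map_sum]
    exact Finset.sum_congr rfl fun k _ => hμt x' x'' (a k) (b k)
  refine ⟨⟨ρ0, hprops, ?_⟩, hSweedler⟩
  -- uniqueness
  rintro ρ' ⟨hanti', hone', hF', hKp', hKm', hJp', hJm'⟩
  have hK'gen : ∀ ν, ρ' (K' ν) = cK' ν := by
    refine finsuppZ_induction _ ?_ ?_ ?_
    · rw [hK'0, hone', cK0]
    · intro i ν ih
      rw [hK'add, hanti', ih, hKp' i, ← cKadd, add_comm]
    · intro i ν ih
      rw [hK'add, hanti', ih, hKm' i, ← cKadd, add_comm]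
  have hJ'gen : ∀ ν, ρ' (J' ν) = 1 := by
    refine finsuppZ_induction _ ?_ ?_ ?_
    · rw [hJ'0, hone']
    · intro i ν ih
      rw [hJ'add, hanti', ih, hJp' i, cJ1, one_mul]
    · intro i ν ih
      rw [hJ'add, hanti', ih, hJm' i, cJ1, one_mul]
  have hFw : ∀ w, ρ' (wordProd F w) = sOpF Sj s w := by
    intro w
    induction w using FreeMonoid.recOn with
    | one => rw [wordProd_one, hone', sOpF_one]
    | of_mul i w ihw => rw [wordProd_mul, wordProd_of, hanti', ihw, hF' i, sOpF_mul, sOpF_of]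
  refine bm.ext fun p => ?_
  rw [hρb, hbm, hanti', hanti', hJ'gen, hK'gen, hFw, one_mul, hop]
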